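/- A right-angled Coxeter group C(𝒢) with 𝒢 finite and not complete is virtually abelian if and only if there do not exist three pairwise non-adjacent vertices in 𝒢 and there does not exist an edge {v,w} and a third vertex u adjacent to neither v nor w. Equivalently, if 𝒢 is not complete and every vertex distinct from two fixed non-adjacent vertices v₁,v₂ is adjacent to both, then C(𝒢) ≅ D_∞ × C(𝒢 ∖ {v₁,v₂}). -/

import Mathlib

/-- The right-angled Coxeter group of a simple graph `G`: generators are the vertices,
which are involutions, with commutation relations between adjacent vertices. -/
abbrev RACG {V : Type*} (G : SimpleGraph V) : Type _ :=
  PresentedGroup {r : FreeGroup V |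
    (∃ v : V, r = FreeGroup.of v * FreeGroup.of v) ∨
    (∃ v w : V, G.Adj v w ∧
      r = FreeGroup.of v * FreeGroup.of w * (FreeGroup.of v)⁻¹ * (FreeGroup.of w)⁻¹)}

namespace RACGAux

variable {V : Type*} {G : SimpleGraph V}

abbrev rels (G : SimpleGraph V) : Set (FreeGroup V) :=
  {r : FreeGroup V |
    (∃ v : V, r = FreeGroup.of v * FreeGroup.of v) ∨
    (∃ v w : V, G.Adj v w ∧
      r = FreeGroup.of v * FreeGroup.of w * (FreeGroup.of v)⁻¹ * (FreeGroup.of w)⁻¹)}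

lemma mk_rel_one {r : FreeGroup V} (h : r ∈ rels G) :
    (PresentedGroup.mk (rels G) r : RACG G) = 1 :=
  (QuotientGroup.eq_one_iff r).mpr (Subgroup.subset_normalClosure h)

lemma of_mul_self (x : V) : (PresentedGroup.of x : RACG G) * PresentedGroup.of x = 1 := by
  have := mk_rel_one (G := G) (r := FreeGroup.of x * FreeGroup.of x) (Or.inl ⟨x, rfl⟩)
  rwa [map_mul] at this

lemma of_inv (x : V) : (PresentedGroup.of x : RACG G)⁻¹ = PresentedGroup.of x :=
  inv_eq_of_mul_eq_one_right (of_mul_self x)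

lemma of_sq (x : V) : (PresentedGroup.of x : RACG G) ^ 2 = 1 := by
  rw [pow_two]; exact of_mul_self x

lemma of_comm {a b : V} (h : G.Adj a b) :
    (PresentedGroup.of a : RACG G) * PresentedGroup.of b
      = PresentedGroup.of b * PresentedGroup.of a := by
  have := mk_rel_one (G := G)
    (r := FreeGroup.of a * FreeGroup.of b * (FreeGroup.of a)⁻¹ * (FreeGroup.of b)⁻¹)
    (Or.inr ⟨a, b, h, rfl⟩)
  simp only [map_mul, map_inv] at this
  have h2 := mul_eq_one_iff_eq_inv.mp this
  rw [inv_inv] at h2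
  exact mul_inv_eq_iff_eq_mul.mp h2

abbrev M3 := Matrix (Fin 3) (Fin 3) ℚ

def Am : M3 := !![1,0,0;1,1,1;-2,0,-1]
def Bm : M3 := !![1,0,0;0,-1,0;0,0,-1]
def Cm : M3 := !![-1,0,0;0,1,0;0,0,-1]

lemma Am_sq : Am * Am = 1 := by
  rw [Matrix.one_fin_three]; norm_num [Am, Matrix.mul_fin_three]
lemma Bm_sq : Bm * Bm = 1 := by
  rw [Matrix.one_fin_three]; norm_num [Bm, Matrix.mul_fin_three]
lemma Cm_sq : Cm * Cm = 1 := by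
  rw [Matrix.one_fin_three]; norm_num [Cm, Matrix.mul_fin_three]
lemma BC_comm : Bm * Cm = Cm * Bm := by norm_num [Bm, Cm, Matrix.mul_fin_three]

def uA : M3ˣ := ⟨Am, Am, Am_sq, Am_sq⟩
def uB : M3ˣ := ⟨Bm, Bm, Bm_sq, Bm_sq⟩
def uC : M3ˣ := ⟨Cm, Cm, Cm_sq, Cm_sq⟩

lemma X_pow (n : ℕ) :
    ((Am * Bm) * (Am * Bm)) ^ n = !![1,0,0;2*(n:ℚ),1,0;-4*(n:ℚ),0,1] := by
  have h : (Am * Bm) * (Am * Bm) = !![1,0,0;2,1,0;-4,0,1] := by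
    norm_num [Am, Bm, Matrix.mul_fin_three]
  rw [h]
  induction n with
  | zero => rw [pow_zero, Matrix.one_fin_three]; norm_num
  | succ k ih => rw [pow_succ, ih, Matrix.mul_fin_three]; push_cast; norm_num; ring_nf; exact ⟨trivial, trivial⟩

lemma Y_pow (n : ℕ) :
    ((Am * Cm) * (Am * Cm)) ^ n = !![1,0,0;-2*(n:ℚ),1,-2*(n:ℚ);0,0,1] := by
  have h : (Am * Cm) * (Am * Cm) = !![1,0,0;-2,1,-2;0,0,1] := by
    norm_num [Am, Cm, Matrix.mul_fin_three]
  rw [h]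
  induction n with
  | zero => rw [pow_zero, Matrix.one_fin_three]; norm_num
  | succ k ih => rw [pow_succ, ih, Matrix.mul_fin_three]; push_cast; norm_num; ring_nf; exact ⟨trivial, trivial⟩

/-- If `u` is non-adjacent to both `v` and `w` (all distinct), then `RACG G` has no
finite-index abelian subgroup. -/
lemma not_virtually_abelian (u v w : V) (huv : u ≠ v) (huw : u ≠ w) (hvw : v ≠ w)
    (hnuv : ¬ G.Adj u v) (hnuw : ¬ G.Adj u w) :
    ¬ ∃ H : Subgroup (RACG G), H.index ≠ 0 ∧ ∀ a ∈ H, ∀ b ∈ H, a * b = b * a := by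
  classical
  rintro ⟨H, hidx, habel⟩
  -- a uniform exponent landing in H
  haveI : H.FiniteIndex := ⟨hidx⟩
  set K := H.normalCore with hK
  haveI : K.FiniteIndex := H.finiteIndex_normalCore
  set N := K.index with hNdef
  have hN : N ≠ 0 := Subgroup.FiniteIndex.index_ne_zero
  have hpow : ∀ g : RACG G, g ^ N ∈ H := fun g => H.normalCore_le (K.pow_index_mem g)
  have hcomm : ∀ x y : RACG G, x ^ N * y ^ N = y ^ N * x ^ N :=
    fun x y => habel _ (hpow x) _ (hpow y)
  -- the representation
  set f : V → M3ˣ := fun t => if t = u then uA else if t = v then uB else if t = w then uC else 1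
    with hf
  have hfu : f u = uA := by simp [hf]
  have hfv : f v = uB := by simp [hf, huv.symm, hvw]
  have hfw : f w = uC := by simp [hf, huw.symm, hvw.symm]
  have hsq : ∀ t : V, f t * f t = 1 := by
    intro t
    simp only [hf]
    split_ifs <;> exact Units.ext (by simp [uA, uB, uC, Am_sq, Bm_sq, Cm_sq])
  have hrels : ∀ r ∈ rels G, FreeGroup.lift f r = 1 := by
    rintro r (⟨t, rfl⟩ | ⟨a, b, hab, rfl⟩)
    · simp only [map_mul, FreeGroup.lift_apply_of]
      exact hsq t
    · simp only [map_mul, map_inv, FreeGroup.lift_apply_of]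
      have hcab : f a * f b = f b * f a := by
        have hone : ∀ t : V, t ≠ u → t ≠ v → t ≠ w → f t = 1 := by
          intro t h1 h2 h3; simp [hf, h1, h2, h3]
        by_cases ha : a = u
        · have hb1 : b ≠ u := fun h => G.irrefl (by rw [ha, h] at hab; exact hab)
          have hb2 : b ≠ v := fun h => hnuv (by rw [ha, h] at hab; exact hab)
          have hb3 : b ≠ w := fun h => hnuw (by rw [ha, h] at hab; exact hab)
          rw [ha, hone b hb1 hb2 hb3, mul_one, one_mul]
        · by_cases hb : b = u
          · have ha2 : a ≠ v := fun h => hnuv (by rw [hb, h] at hab; exact hab.symm)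
            have ha3 : a ≠ w := fun h => hnuw (by rw [hb, h] at hab; exact hab.symm)
            rw [hone a ha ha2 ha3, mul_one, one_mul]
          · by_cases hav : a = v
            · have hb2 : b ≠ v := fun h => G.irrefl (by rw [hav, h] at hab; exact hab)
              by_cases hbw : b = w
              · rw [hav, hbw, hfv, hfw]
                exact Units.ext (by simpa [uB, uC] using BC_comm)
              · rw [hav, hone b hb hb2 hbw, mul_one, one_mul]
            · by_cases haw : a = w
              · have hb3 : b ≠ w := fun h => G.irrefl (by rw [haw, h] at hab; exact hab)
                by_cases hbv : b = v
                · rw [haw, hbv, hfv, hfw]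
                  exact Units.ext (by simpa [uB, uC] using BC_comm.symm)
                · rw [haw, hone b hb hbv hb3, mul_one, one_mul]
              · rw [hone a ha hav haw, mul_one, one_mul]
      rw [hcab]
      group
  set φ : RACG G →* M3ˣ := PresentedGroup.toGroup hrels with hφ
  set x : RACG G := (PresentedGroup.of u * PresentedGroup.of v) ^ 2 with hx
  set y : RACG G := (PresentedGroup.of u * PresentedGroup.of w) ^ 2 with hy
  have hφx : ((φ x : M3ˣ) : M3) = (Am * Bm) * (Am * Bm) := by
    rw [hx]
    rw [map_pow, map_mul]
    rw [hφ, PresentedGroup.toGroup.of, PresentedGroup.toGroup.of, hfu, hfv]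
    rw [pow_two]
    rfl
  have hφy : ((φ y : M3ˣ) : M3) = (Am * Cm) * (Am * Cm) := by
    rw [hy, map_pow, map_mul, hφ, PresentedGroup.toGroup.of, PresentedGroup.toGroup.of,
      hfu, hfw, pow_two]
    rfl
  have hkey := congrArg (fun g : RACG G => ((φ g : M3ˣ) : M3)) (hcomm x y)
  simp only [map_mul, map_pow, Units.val_mul, Units.val_pow_eq_pow_val] at hkey
  rw [hφx, hφy, X_pow, Y_pow, Matrix.mul_fin_three, Matrix.mul_fin_three] at hkey
  have h21 := congrFun (congrFun hkey 1) 0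
  simp at h21
  exact hN h21


/-- If every vertex has at most one non-neighbour, `RACG G` has a finite-index abelian
subgroup. -/
lemma virtually_abelian [Fintype V]
    (hU : ∀ a b c : V, a ≠ b → a ≠ c → ¬ G.Adj a b → ¬ G.Adj a c → b = c) :
    ∃ H : Subgroup (RACG G), H.index ≠ 0 ∧ ∀ a ∈ H, ∀ b ∈ H, a * b = b * a := by
  classical
  set S : Set (RACG G) :=
    {x | ∃ a b : V, a ≠ b ∧ ¬ G.Adj a b ∧ x = PresentedGroup.of a * PresentedGroup.of b}
    with hS
  set H : Subgroup (RACG G) := Subgroup.closure S with hH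
  -- generators commute
  have gen_comm : ∀ x ∈ S, ∀ y ∈ S, Commute x y := by
    rintro x ⟨a, b, hab, hnab, rfl⟩ y ⟨c, d, hcd, hncd, rfl⟩
    by_cases hac : a = c
    · have had : a ≠ d := fun h => hcd (hac.symm.trans h)
      have hnad : ¬ G.Adj a d := fun h => hncd (by rwa [hac] at h)
      have hbd : b = d := hU a b d hab had hnab hnad
      rw [hac, hbd]
    · by_cases had : a = d
      · have hnca : ¬ G.Adj c a := fun h => hncd (by rwa [had] at h)
        have hnac : ¬ G.Adj a c := fun h => hnca h.symm
        have hbc : b = c := hU a b c hab hac hnab hnac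
        have : PresentedGroup.of c * PresentedGroup.of d
            = ((PresentedGroup.of a : RACG G) * PresentedGroup.of b)⁻¹ := by
          rw [mul_inv_rev, of_inv, of_inv, hbc, had]
        rw [this]
        exact (Commute.refl _).inv_right
      · by_cases hbc : b = c
        · exfalso
          have h1 : b ≠ a := hab.symm
          have h2 : b ≠ d := fun h => hcd (hbc.symm.trans h)
          have h3 : ¬ G.Adj b a := fun h => hnab h.symm
          have h4 : ¬ G.Adj b d := fun h => hncd (by rwa [hbc] at h)
          exact had ((hU b a d h1 h2 h3 h4).symm ▸ rfl)
        · by_cases hbd : b = d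
          · exfalso
            have h1 : b ≠ a := hab.symm
            have h2 : b ≠ c := hbc
            have h3 : ¬ G.Adj b a := fun h => hnab h.symm
            have h4 : ¬ G.Adj b c := fun h => hncd (by rw [hbd] at h; exact h.symm)
            exact hac ((hU b a c h1 h2 h3 h4).symm ▸ rfl)
          · -- all four cross pairs adjacent
            have h1 : G.Adj a c := by
              by_contra hn
              exact hbc (hU a b c hab hac hnab hn)
            have h2 : G.Adj a d := by
              by_contra hn
              exact hbd (hU a b d hab had hnab hn)
            have h3 : G.Adj b c := by
              by_contra hn
              exact hac (hU b a c hab.symm hbc (fun h => hnab h.symm) hn)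
            have h4 : G.Adj b d := by
              by_contra hn
              exact had (hU b a d hab.symm hbd (fun h => hnab h.symm) hn)
            exact Commute.mul_right
              (Commute.mul_left (of_comm h1) (of_comm h3))
              (Commute.mul_left (of_comm h2) (of_comm h4))
  -- H is abelian
  have habel : ∀ a ∈ H, ∀ b ∈ H, a * b = b * a := by
    intro a ha b hb
    exact Subgroup.closure_induction₂
      (p := fun x y _ _ => Commute x y)
      (fun x y hx hy => gen_comm x hx y hy)
      (fun x _ => Commute.one_left x)
      (fun x _ => Commute.one_right x)
      (fun x y z _ _ _ h1 h2 => h1.mul_left h2)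
      (fun y z x _ _ _ h1 h2 => h1.mul_right h2)
      (fun x y _ _ h => h.inv_left)
      (fun x y _ _ h => h.inv_right)
      ha hb
  -- conjugation by generators preserves H
  have conj_gen : ∀ t : V, ∀ x ∈ S,
      (PresentedGroup.of t : RACG G) * x * (PresentedGroup.of t)⁻¹ ∈ H := by
    rintro t x ⟨a, b, hab, hnab, rfl⟩
    rw [of_inv]
    have hinvmem : (PresentedGroup.of b : RACG G) * PresentedGroup.of a ∈ H := by
      have e : (PresentedGroup.of b : RACG G) * PresentedGroup.of a
          = ((PresentedGroup.of a : RACG G) * PresentedGroup.of b)⁻¹ := by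
        rw [mul_inv_rev, of_inv, of_inv]
      rw [e]
      exact H.inv_mem (Subgroup.subset_closure ⟨a, b, hab, hnab, rfl⟩)
    by_cases hta : t = a
    · have e : (PresentedGroup.of t : RACG G) *
          (PresentedGroup.of a * PresentedGroup.of b) * PresentedGroup.of t
          = (PresentedGroup.of t * PresentedGroup.of a) * PresentedGroup.of b *
            PresentedGroup.of t := by group
      rw [e, hta, of_mul_self, one_mul]
      rw [← hta, hta]
      exact hinvmem
    · by_cases htb : t = b
      · have e : (PresentedGroup.of t : RACG G) *
            (PresentedGroup.of a * PresentedGroup.of b) * PresentedGroup.of t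
            = PresentedGroup.of t * PresentedGroup.of a *
              (PresentedGroup.of b * PresentedGroup.of t) := by group
        rw [e, htb, of_mul_self, mul_one]
        exact hinvmem
      · have h1 : G.Adj t a := by
          by_contra hn
          exact htb (hU a b t hab (fun h => hta h.symm) hnab (fun h => hn h.symm)).symm
        have h2 : G.Adj t b := by
          by_contra hn
          exact hta (hU b a t hab.symm (fun h => htb h.symm)
            (fun h => hnab h.symm) (fun h => hn h.symm)).symm
        have key : (PresentedGroup.of t : RACG G) *
            (PresentedGroup.of a * PresentedGroup.of b) * PresentedGroup.of t
            = PresentedGroup.of a * PresentedGroup.of b := by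
          calc (PresentedGroup.of t : RACG G) *
              (PresentedGroup.of a * PresentedGroup.of b) * PresentedGroup.of t
              = (PresentedGroup.of t * PresentedGroup.of a) *
                (PresentedGroup.of b * PresentedGroup.of t) := by group
            _ = (PresentedGroup.of a * PresentedGroup.of t) *
                (PresentedGroup.of b * PresentedGroup.of t) := by rw [of_comm h1]
            _ = PresentedGroup.of a * ((PresentedGroup.of t * PresentedGroup.of b) *
                PresentedGroup.of t) := by group
            _ = PresentedGroup.of a * ((PresentedGroup.of b * PresentedGroup.of t) *
                PresentedGroup.of t) := by rw [of_comm h2]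
            _ = PresentedGroup.of a * PresentedGroup.of b *
                (PresentedGroup.of t * PresentedGroup.of t) := by group
            _ = PresentedGroup.of a * PresentedGroup.of b := by rw [of_mul_self, mul_one]
        rw [key]
        exact Subgroup.subset_closure ⟨a, b, hab, hnab, rfl⟩
  -- conjugation by generators preserves H (all elements)
  have conj_mem : ∀ t : V, ∀ g ∈ H,
      (PresentedGroup.of t : RACG G) * g * (PresentedGroup.of t)⁻¹ ∈ H := by
    intro t g hg
    refine Subgroup.closure_induction
      (p := fun g _ => (PresentedGroup.of t : RACG G) * g * (PresentedGroup.of t)⁻¹ ∈ H)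
      (fun x hx => conj_gen t x hx) (by simpa using H.one_mem) ?_ ?_ hg
    · intro x y _ _ ihx ihy
      have e : (PresentedGroup.of t : RACG G) * (x * y) * (PresentedGroup.of t)⁻¹
          = ((PresentedGroup.of t : RACG G) * x * (PresentedGroup.of t)⁻¹) *
            ((PresentedGroup.of t : RACG G) * y * (PresentedGroup.of t)⁻¹) := by group
      rw [e]; exact H.mul_mem ihx ihy
    · intro x _ ihx
      have e : (PresentedGroup.of t : RACG G) * x⁻¹ * (PresentedGroup.of t)⁻¹
          = ((PresentedGroup.of t : RACG G) * x * (PresentedGroup.of t)⁻¹)⁻¹ := by group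
      rw [e]; exact H.inv_mem ihx
  -- H is normal
  haveI hnorm : H.Normal := by
    rw [← Subgroup.normalizer_eq_top_iff, Subgroup.eq_top_iff']
    intro x
    refine PresentedGroup.generated_by _ _ (fun j => ?_) x
    rw [Subgroup.mem_normalizer_iff]
    intro h
    constructor
    · intro hh; exact conj_mem j h hh
    · intro hh
      have h2 := conj_mem j _ hh
      have e : (PresentedGroup.of j : RACG G) *
          (PresentedGroup.of j * h * (PresentedGroup.of j)⁻¹) * (PresentedGroup.of j)⁻¹
          = (PresentedGroup.of j * PresentedGroup.of j) * h *
            ((PresentedGroup.of j * PresentedGroup.of j))⁻¹ := by group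
      rw [e, of_mul_self, one_mul, inv_one, mul_one] at h2
      exact h2
  -- the quotient
  set π : RACG G →* RACG G ⧸ H := QuotientGroup.mk' H with hπ
  set σ : V → RACG G ⧸ H := fun t => π (PresentedGroup.of t) with hσ
  have hsqσ : ∀ t, σ t ^ 2 = 1 := fun t => by
    rw [hσ]; simp only []; rw [← map_pow, of_sq, map_one]
  have honeσ : ∀ {a b : V}, a ≠ b → ¬ G.Adj a b → σ a * σ b = 1 := by
    intro a b h hn
    rw [hσ]; simp only []; rw [← map_mul]
    exact (QuotientGroup.eq_one_iff _).mpr (Subgroup.subset_closure ⟨a, b, h, hn, rfl⟩)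
  have hcommσ : ∀ s t : V, Commute (σ s) (σ t) := by
    intro s t
    by_cases hst : s = t
    · rw [hst]
    · by_cases hadj : G.Adj s t
      · show σ s * σ t = σ t * σ s
        rw [hσ]; simp only []; rw [← map_mul, ← map_mul, of_comm hadj]
      · show σ s * σ t = σ t * σ s
        rw [honeσ hst hadj, honeσ (Ne.symm hst) (fun h => hadj h.symm)]
  have hsurjπ : Function.Surjective π := QuotientGroup.mk'_surjective H
  have hcent : ∀ (t : V) (q : RACG G ⧸ H), Commute (σ t) q := by
    intro t q
    obtain ⟨g, rfl⟩ := hsurjπ q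
    have hmem : g ∈ (Subgroup.centralizer {σ t}).comap π := by
      refine PresentedGroup.generated_by _ _ (fun j => ?_) g
      rw [Subgroup.mem_comap, Subgroup.mem_centralizer_iff]
      intro x hx
      rw [Set.mem_singleton_iff] at hx
      rw [hx]
      exact hcommσ t j
    have h2 := Subgroup.mem_comap.mp hmem
    rw [Subgroup.mem_centralizer_iff] at h2
    exact h2 (σ t) (Set.mem_singleton _)
  have hcommQ : ∀ q r : RACG G ⧸ H, q * r = r * q := by
    intro q r
    obtain ⟨g, rfl⟩ := hsurjπ q
    have hmem : g ∈ (Subgroup.centralizer {r}).comap π := by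
      refine PresentedGroup.generated_by _ _ (fun j => ?_) g
      rw [Subgroup.mem_comap, Subgroup.mem_centralizer_iff]
      intro x hx
      rw [Set.mem_singleton_iff] at hx
      rw [hx]
      exact (hcent j r).symm
    have h2 := Subgroup.mem_comap.mp hmem
    rw [Subgroup.mem_centralizer_iff] at h2
    exact (h2 r (Set.mem_singleton _)).symm
  letI : CommGroup (RACG G ⧸ H) :=
    { (inferInstance : Group (RACG G ⧸ H)) with mul_comm := hcommQ }
  set F : (V → ZMod 2) → RACG G ⧸ H := fun e => ∏ t : V, σ t ^ (e t).val with hF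
  have hFadd : ∀ e e', F (e + e') = F e * F e' := by
    intro e e'
    rw [hF]
    simp only []
    rw [← Finset.prod_mul_distrib]
    refine Finset.prod_congr rfl (fun t _ => ?_)
    rw [← pow_add, Pi.add_apply, ZMod.val_add, ← pow_eq_pow_mod _ (hsqσ t)]
  have hFzero : F 0 = 1 := by
    rw [hF]; simp
  have hFself : ∀ e, F e * F e = 1 := by
    intro e
    rw [← hFadd]
    have he : e + e = 0 := funext fun t => by
      have h2 : ∀ x : ZMod 2, x + x = 0 := by decide
      exact h2 (e t)
    rw [he, hFzero]
  set R : Subgroup (RACG G ⧸ H) :=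
    { carrier := Set.range F
      one_mem' := ⟨0, hFzero⟩
      mul_mem' := by rintro _ _ ⟨e, rfl⟩ ⟨e', rfl⟩; exact ⟨e + e', hFadd e e'⟩
      inv_mem' := by
        rintro _ ⟨e, rfl⟩
        exact ⟨e, (inv_eq_of_mul_eq_one_right (hFself e)).symm⟩ } with hR
  have hσR : ∀ j : V, σ j ∈ R := by
    intro j
    refine ⟨Pi.single j 1, ?_⟩
    rw [hF]
    simp only []
    rw [Finset.prod_eq_single j (fun t _ htj => by rw [Pi.single_eq_of_ne htj]; simp)
      (fun h => absurd (Finset.mem_univ j) h)]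
    rw [Pi.single_eq_same, show (ZMod.val (1 : ZMod 2)) = 1 from rfl, pow_one]
  have hsurjF : Function.Surjective F := by
    intro q
    obtain ⟨g, rfl⟩ := hsurjπ q
    have hmem : g ∈ R.comap π := PresentedGroup.generated_by _ _ (fun j => hσR j) g
    exact Subgroup.mem_comap.mp hmem
  haveI hfin : Finite (RACG G ⧸ H) := Finite.of_surjective F hsurjF
  exact ⟨H, Subgroup.index_ne_zero_of_finite, habel⟩


lemma racg_iso (v₁ v₂ : V) (h12 : v₁ ≠ v₂) (hn : ¬ G.Adj v₁ v₂)
    (hadj : ∀ u : V, u ≠ v₁ → u ≠ v₂ → G.Adj u v₁ ∧ G.Adj u v₂) :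
    Nonempty (RACG G ≃*
      RACG (⊥ : SimpleGraph (Fin 2)) ×
        RACG (SimpleGraph.induce {u : V | u ≠ v₁ ∧ u ≠ v₂} G)) := by
  classical
  set s : Set V := {u : V | u ≠ v₁ ∧ u ≠ v₂} with hs
  set D := RACG (⊥ : SimpleGraph (Fin 2)) with hD
  set R := RACG (SimpleGraph.induce s G) with hR
  -- the forward map
  set f : V → D × R := fun t =>
    if h1 : t = v₁ then ((PresentedGroup.of 0 : D), 1)
    else if h2 : t = v₂ then ((PresentedGroup.of 1 : D), 1)
    else (1, (PresentedGroup.of (⟨t, h1, h2⟩ : s) : R)) with hf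
  have hfv1 : f v₁ = ((PresentedGroup.of 0 : D), 1) := by simp [hf]
  have hfv2 : f v₂ = ((PresentedGroup.of 1 : D), 1) := by simp [hf, h12.symm]
  have hfo : ∀ t (h1 : t ≠ v₁) (h2 : t ≠ v₂),
      f t = (1, (PresentedGroup.of (⟨t, h1, h2⟩ : s) : R)) := by
    intro t h1 h2; simp [hf, h1, h2]
  have hrelφ : ∀ r ∈ rels G, FreeGroup.lift f r = 1 := by
    rintro r (⟨t, rfl⟩ | ⟨a, b, hab, rfl⟩)
    · simp only [map_mul, FreeGroup.lift_apply_of]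
      by_cases h1 : t = v₁
      · rw [h1, hfv1, Prod.mk_mul_mk, of_mul_self, mul_one]; rfl
      · by_cases h2 : t = v₂
        · rw [h2, hfv2, Prod.mk_mul_mk, of_mul_self, mul_one]; rfl
        · rw [hfo t h1 h2, Prod.mk_mul_mk, of_mul_self, mul_one]; rfl
    · simp only [map_mul, map_inv, FreeGroup.lift_apply_of]
      have hcab : f a * f b = f b * f a := by
        have hmix : ∀ (x : D) (y : R), (x, (1 : R)) * ((1 : D), y) = ((1 : D), y) * (x, 1) := by
          intro x y
          rw [Prod.mk_mul_mk, Prod.mk_mul_mk, one_mul, mul_one, one_mul, mul_one]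
        by_cases ha1 : a = v₁
        · have hb1 : b ≠ v₁ := fun h => G.irrefl (by rw [ha1, h] at hab; exact hab)
          have hb2 : b ≠ v₂ := fun h => hn (by rw [ha1, h] at hab; exact hab)
          rw [ha1, hfv1, hfo b hb1 hb2, hmix]
        · by_cases ha2 : a = v₂
          · have hb1 : b ≠ v₁ := fun h => hn (by rw [ha2, h] at hab; exact hab.symm)
            have hb2 : b ≠ v₂ := fun h => G.irrefl (by rw [ha2, h] at hab; exact hab)
            rw [ha2, hfv2, hfo b hb1 hb2, hmix]
          · by_cases hb1 : b = v₁
            · rw [hb1, hfv1, hfo a ha1 ha2, ← hmix]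
            · by_cases hb2 : b = v₂
              · rw [hb2, hfv2, hfo a ha1 ha2, ← hmix]
              · rw [hfo a ha1 ha2, hfo b hb1 hb2, Prod.mk_mul_mk, Prod.mk_mul_mk, one_mul]
                have hadj' : (SimpleGraph.induce s G).Adj ⟨a, ha1, ha2⟩ ⟨b, hb1, hb2⟩ := hab
                rw [of_comm hadj']
      rw [hcab]; group
  set φ : RACG G →* D × R := PresentedGroup.toGroup hrelφ with hφ
  -- the two backward maps
  set f₁ : Fin 2 → RACG G := fun i => if i = 0 then PresentedGroup.of v₁
    else PresentedGroup.of v₂ with hf₁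
  have hrel₁ : ∀ r ∈ rels (⊥ : SimpleGraph (Fin 2)), FreeGroup.lift f₁ r = 1 := by
    rintro r (⟨i, rfl⟩ | ⟨i, j, hij, rfl⟩)
    · simp only [map_mul, FreeGroup.lift_apply_of]
      by_cases h : i = 0 <;> simp [hf₁, h, of_mul_self]
    · simp at hij
  set ψ₁ : D →* RACG G := PresentedGroup.toGroup hrel₁ with hψ₁
  set f₂ : s → RACG G := fun a => PresentedGroup.of a.val with hf₂
  have hrel₂ : ∀ r ∈ rels (SimpleGraph.induce s G), FreeGroup.lift f₂ r = 1 := by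
    rintro r (⟨a, rfl⟩ | ⟨a, b, hab, rfl⟩)
    · simp only [map_mul, FreeGroup.lift_apply_of]
      exact of_mul_self a.val
    · simp only [map_mul, map_inv, FreeGroup.lift_apply_of]
      have : G.Adj a.val b.val := hab
      rw [hf₂]
      simp only []
      rw [of_comm this]
      group
  set ψ₂ : R →* RACG G := PresentedGroup.toGroup hrel₂ with hψ₂
  -- images commute
  have comm1 : ∀ (i : Fin 2) (rr : R), Commute (ψ₁ (PresentedGroup.of i)) (ψ₂ rr) := by
    intro i rr
    have hmem : rr ∈ (Subgroup.centralizer {ψ₁ (PresentedGroup.of i)}).comap ψ₂ := by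
      refine PresentedGroup.generated_by _ _ (fun j => ?_) rr
      rw [Subgroup.mem_comap, Subgroup.mem_centralizer_iff]
      intro x hx
      rw [Set.mem_singleton_iff] at hx
      have e1 : ψ₂ (PresentedGroup.of j) = f₂ j := by
        rw [hψ₂]; exact PresentedGroup.toGroup.of hrel₂
      have e2 : ψ₁ (PresentedGroup.of i) = f₁ i := by
        rw [hψ₁]; exact PresentedGroup.toGroup.of hrel₁
      rw [hx, e1, e2]
      have hj1 : G.Adj j.val v₁ := (hadj j.val j.2.1 j.2.2).1
      have hj2 : G.Adj j.val v₂ := (hadj j.val j.2.1 j.2.2).2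
      by_cases h : i = 0
      · rw [show f₁ i = PresentedGroup.of v₁ from if_pos h,
          show f₂ j = PresentedGroup.of j.val from rfl]
        exact of_comm hj1.symm
      · rw [show f₁ i = PresentedGroup.of v₂ from if_neg h,
          show f₂ j = PresentedGroup.of j.val from rfl]
        exact of_comm hj2.symm
    have h2 := Subgroup.mem_comap.mp hmem
    rw [Subgroup.mem_centralizer_iff] at h2
    exact h2 _ (Set.mem_singleton _)
  have comm : ∀ (d : D) (rr : R), Commute (ψ₁ d) (ψ₂ rr) := by
    intro d rr
    have hmem : d ∈ (Subgroup.centralizer {ψ₂ rr}).comap ψ₁ := by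
      refine PresentedGroup.generated_by _ _ (fun i => ?_) d
      rw [Subgroup.mem_comap, Subgroup.mem_centralizer_iff]
      intro x hx
      rw [Set.mem_singleton_iff] at hx
      rw [hx]
      exact (comm1 i rr).symm
    have h2 := Subgroup.mem_comap.mp hmem
    rw [Subgroup.mem_centralizer_iff] at h2
    exact (h2 _ (Set.mem_singleton _)).symm
  set Ψ : D × R →* RACG G := ψ₁.noncommCoprod ψ₂ comm with hΨ
  -- the compositions are the identity
  have hleft : Ψ.comp φ = MonoidHom.id (RACG G) := by
    apply PresentedGroup.ext
    intro t
    rw [MonoidHom.comp_apply, MonoidHom.id_apply, hφ, PresentedGroup.toGroup.of]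
    by_cases h1 : t = v₁
    · rw [h1, hfv1, hΨ, MonoidHom.noncommCoprod_apply]
      rw [map_one, mul_one, hψ₁, PresentedGroup.toGroup.of]
      exact if_pos rfl
    · by_cases h2 : t = v₂
      · rw [h2, hfv2, hΨ, MonoidHom.noncommCoprod_apply]
        rw [map_one, mul_one, hψ₁, PresentedGroup.toGroup.of]
        rw [show f₁ 1 = PresentedGroup.of v₂ from if_neg (by decide)]
      · rw [hfo t h1 h2, hΨ, MonoidHom.noncommCoprod_apply]
        rw [map_one, one_mul, hψ₂, PresentedGroup.toGroup.of]
  have hright1 : φ.comp ψ₁ = (MonoidHom.inl D R) := by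
    apply PresentedGroup.ext
    intro i
    rw [MonoidHom.comp_apply, hψ₁, PresentedGroup.toGroup.of, MonoidHom.inl_apply]
    by_cases h : i = 0
    · rw [show f₁ i = PresentedGroup.of v₁ from if_pos h, hφ, PresentedGroup.toGroup.of, hfv1, h]
    · have h1 : i = 1 := by omega
      rw [show f₁ i = PresentedGroup.of v₂ from if_neg h, hφ, PresentedGroup.toGroup.of, hfv2, h1]
  have hright2 : φ.comp ψ₂ = (MonoidHom.inr D R) := by
    apply PresentedGroup.ext
    intro j
    rw [MonoidHom.comp_apply, hψ₂, PresentedGroup.toGroup.of, MonoidHom.inr_apply]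
    rw [show f₂ j = PresentedGroup.of j.val from rfl]
    rw [hφ, PresentedGroup.toGroup.of, hfo j.val j.2.1 j.2.2]
  have hright : ∀ p : D × R, φ (Ψ p) = p := by
    rintro ⟨d, rr⟩
    rw [hΨ, MonoidHom.noncommCoprod_apply, map_mul]
    have e1 : φ (ψ₁ d) = (d, 1) := by
      have := DFunLike.congr_fun hright1 d
      rw [MonoidHom.comp_apply] at this
      rw [this, MonoidHom.inl_apply]
    have e2 : φ (ψ₂ rr) = (1, rr) := by
      have := DFunLike.congr_fun hright2 rr
      rw [MonoidHom.comp_apply] at this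
      rw [this, MonoidHom.inr_apply]
    rw [e1, e2, Prod.mk_mul_mk, mul_one, one_mul]
  exact ⟨{ toFun := φ
           invFun := Ψ
           left_inv := fun x => by
             have := DFunLike.congr_fun hleft x
             rw [MonoidHom.comp_apply, MonoidHom.id_apply] at this
             exact this
           right_inv := hright
           map_mul' := φ.map_mul }⟩


end RACGAux

/-- A right-angled Coxeter group on a finite non-complete graph is virtually abelian iff
there are no three pairwise non-adjacent vertices and no edge `{v,w}` together with a
third vertex adjacent to neither endpoint.  Equivalently, if every vertex other than two
fixed non-adjacent vertices `v₁, v₂` is adjacent to both, then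
`C(G) ≅ D_∞ × C(G ∖ {v₁, v₂})`, where `D_∞` is the Coxeter group of two non-adjacent
vertices. -/
theorem racg_virtually_abelian_iff {V : Type*} [Fintype V] (G : SimpleGraph V)
    (hnc : ∃ v w : V, v ≠ w ∧ ¬ G.Adj v w) :
    ((∃ H : Subgroup (RACG G), H.index ≠ 0 ∧ ∀ a ∈ H, ∀ b ∈ H, a * b = b * a) ↔
      (¬ ∃ u v w : V, u ≠ v ∧ u ≠ w ∧ v ≠ w ∧
          ¬ G.Adj u v ∧ ¬ G.Adj u w ∧ ¬ G.Adj v w) ∧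
      (¬ ∃ v w u : V, G.Adj v w ∧ u ≠ v ∧ u ≠ w ∧ ¬ G.Adj u v ∧ ¬ G.Adj u w)) ∧
    (∀ v₁ v₂ : V, v₁ ≠ v₂ → ¬ G.Adj v₁ v₂ →
      (∀ u : V, u ≠ v₁ → u ≠ v₂ → G.Adj u v₁ ∧ G.Adj u v₂) →
      Nonempty (RACG G ≃*
        RACG (⊥ : SimpleGraph (Fin 2)) ×
          RACG (SimpleGraph.induce {u : V | u ≠ v₁ ∧ u ≠ v₂} G))) := by
  constructor
  · constructor
    · intro hva
      constructor
      · rintro ⟨u, v, w, huv, huw, hvw, hnuv, hnuw, hnvw⟩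
        exact RACGAux.not_virtually_abelian u v w huv huw hvw hnuv hnuw hva
      · rintro ⟨v, w, u, hadj, huv, huw, hnuv, hnuw⟩
        exact RACGAux.not_virtually_abelian u v w huv huw hadj.ne hnuv hnuw hva
    · rintro ⟨h1, h2⟩
      apply RACGAux.virtually_abelian
      intro a b c hab hac hnab hnac
      by_contra hbc
      by_cases hadjbc : G.Adj b c
      · exact h2 ⟨b, c, a, hadjbc, hab, hac, hnab, hnac⟩
      · exact h1 ⟨a, b, c, hab, hac, hbc, hnab, hnac, hadjbc⟩
  · intro v₁ v₂ h12 hn hadj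
    exact RACGAux.racg_iso v₁ v₂ h12 hn hadj
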